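/- Let m ≥ 0 and let P ⊂ [0,1)² be the separated point set from the construction (one point in each dyadic square of a maximally dist_H-separated family of 2^{2m+1} squares of side 2^{-2m-1}). Let R = I × J be a standard rectangle (a dyadic rectangle in [0,1)² of area 2^{-2m-2} containing a point of P), with p_R ∈ R ∩ P, and suppose ℓ ≥ 1 is such that I × J^{(ℓ+1)} ⊆ [0,1)². Then the rectangle I_{(ℓ)} × J^{(ℓ+1)} contains exactly one point q of P with q ≠ p_R, and moreover q ∈ I_{(ℓ)} × (J^{(ℓ+1)} \ J^{(ℓ)}). -/
import Mathlib


open MeasureTheory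
open scoped ENNReal

/-- A dyadic interval `[k·2^n, (k+1)·2^n)`. -/
def IsDyadicInterval (I : Set ℝ) : Prop :=
  ∃ k n : ℤ, I = Set.Ico ((k : ℝ) * 2 ^ n) (((k : ℝ) + 1) * 2 ^ n)

/-- An axis-parallel dyadic rectangle in the plane. -/
def IsDyadicRect (R : Set (ℝ × ℝ)) : Prop :=
  ∃ I J : Set ℝ, IsDyadicInterval I ∧ IsDyadicInterval J ∧ R = I ×ˢ J

def unitSq : Set (ℝ × ℝ) := Set.Ico (0 : ℝ) 1 ×ˢ Set.Ico (0 : ℝ) 1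

/-- Lemma (LocalizePs): if `R = I × J` is a standard rectangle (dyadic, of area
`2^{-2m-2}`, containing the point `p ∈ P`), `ℓ ≥ 1`, and `I × J^{(ℓ+1)} ⊆ [0,1)²`,
then `I_{(ℓ)} × J^{(ℓ+1)}` contains exactly one point `q ∈ P` with `q ≠ p`, and
moreover `q ∈ I_{(ℓ)} × (J^{(ℓ+1)} \ J^{(ℓ)})`. -/
theorem stmt12 (m : ℕ) (P : Finset (ℝ × ℝ))
    (hPsub : (↑P : Set (ℝ × ℝ)) ⊆ unitSq)
    -- every dyadic rectangle of area `2^{-2m-1}` in the unit square contains exactly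
    -- one point of `P`
    (hP1 : ∀ R : Set (ℝ × ℝ), IsDyadicRect R → R ⊆ unitSq →
      volume R = (2 : ℝ≥0∞) ^ (-(2 * (m : ℤ)) - 1) → ∃! q, q ∈ P ∧ q ∈ R)
    -- any dyadic rectangle containing two distinct points of `P` has area `≥ 2^{-2m}`
    (hP2 : ∀ p ∈ P, ∀ q ∈ P, p ≠ q → ∀ R : Set (ℝ × ℝ), IsDyadicRect R →
      p ∈ R → q ∈ R → (2 : ℝ≥0∞) ^ (-(2 * (m : ℤ))) ≤ volume R)
    -- the standard rectangle `R = I × J` with its point `p`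
    (I J : Set ℝ) (hI : IsDyadicInterval I) (hJ : IsDyadicInterval J)
    (hRsub : I ×ˢ J ⊆ unitSq)
    (hRvol : volume (I ×ˢ J) = (2 : ℝ≥0∞) ^ (-(2 * (m : ℤ)) - 2))
    (p : ℝ × ℝ) (hpP : p ∈ P) (hpR : p ∈ I ×ˢ J)
    (ℓ : ℕ) (hℓ : 1 ≤ ℓ)
    -- `Iℓ = I_{(ℓ)}`: the generation-`ℓ` dyadic descendant of `I` not containing
    -- `p.1` but whose dyadic parent contains `p.1`
    (Iℓ : Set ℝ) (hIℓ : IsDyadicInterval Iℓ) (hIℓI : Iℓ ⊆ I)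
    (hIℓvol : volume Iℓ = (2 : ℝ≥0∞) ^ (-(ℓ : ℤ)) * volume I)
    (hIℓp : p.1 ∉ Iℓ)
    (hIℓpar : ∃ Ihat : Set ℝ, IsDyadicInterval Ihat ∧ Iℓ ⊆ Ihat ∧
      volume Ihat = 2 * volume Iℓ ∧ p.1 ∈ Ihat)
    -- `Jup = J^{(ℓ+1)}`: the dyadic ancestor of `J` of generation `ℓ+1`
    (Jup : Set ℝ) (hJup : IsDyadicInterval Jup) (hJJup : J ⊆ Jup)
    (hJupvol : volume Jup = (2 : ℝ≥0∞) ^ ((ℓ : ℤ) + 1) * volume J)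
    -- `Jl = J^{(ℓ)}`: the dyadic ancestor of `J` of generation `ℓ`
    (Jl : Set ℝ) (hJl : IsDyadicInterval Jl) (hJJl : J ⊆ Jl)
    (hJlvol : volume Jl = (2 : ℝ≥0∞) ^ (ℓ : ℤ) * volume J)
    (hcontain : I ×ˢ Jup ⊆ unitSq) :
    ∃ q, (q ∈ P ∧ q ≠ p ∧ q ∈ Iℓ ×ˢ (Jup \ Jl)) ∧
      ∀ q', q' ∈ P → q' ≠ p → q' ∈ Iℓ ×ˢ Jup → q' = q := by

  classical
  have hprod : ∀ (s t : Set ℝ), volume (s ×ˢ t) = volume s * volume t := by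
    intro s t
    rw [Measure.volume_eq_prod, Measure.prod_prod]
  obtain ⟨Ihat, hIhatDy, hIℓIhat, hIhatvol, hpIhat⟩ := hIℓpar
  have h2 : (2 : ℝ≥0∞) ≠ 0 := by norm_num
  have h2' : (2 : ℝ≥0∞) ≠ ⊤ := by norm_num
  have hab : volume I * volume J = (2 : ℝ≥0∞) ^ (-(2 * (m : ℤ)) - 2) := by
    rw [← hprod]; exact hRvol
  -- volume of Iℓ × Jup is 2^{-2m-1}
  have hv1 : volume (Iℓ ×ˢ Jup) = (2 : ℝ≥0∞) ^ (-(2 * (m : ℤ)) - 1) := by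
    rw [hprod, hIℓvol, hJupvol]
    calc (2:ℝ≥0∞) ^ (-(ℓ:ℤ)) * volume I * ((2:ℝ≥0∞) ^ ((ℓ:ℤ)+1) * volume J)
        = ((2:ℝ≥0∞) ^ (-(ℓ:ℤ)) * (2:ℝ≥0∞) ^ ((ℓ:ℤ)+1)) * (volume I * volume J) := by
          ring
      _ = (2:ℝ≥0∞) ^ ((1:ℤ)) * (2:ℝ≥0∞) ^ (-(2 * (m : ℤ)) - 2) := by
          rw [← ENNReal.zpow_add h2 h2', hab]; ring_nf
      _ = (2:ℝ≥0∞) ^ (-(2 * (m : ℤ)) - 1) := by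
          rw [← ENNReal.zpow_add h2 h2']; ring_nf
  have hsub1 : Iℓ ×ˢ Jup ⊆ unitSq := fun x hx =>
    hcontain ⟨hIℓI hx.1, hx.2⟩
  have hdy1 : IsDyadicRect (Iℓ ×ˢ Jup) := ⟨Iℓ, Jup, hIℓ, hJup, rfl⟩
  obtain ⟨q, ⟨hqP, hqR⟩, hquniq⟩ := hP1 (Iℓ ×ˢ Jup) hdy1 hsub1 hv1
  have hq1 : q.1 ∈ Iℓ := hqR.1
  have hq2 : q.2 ∈ Jup := hqR.2
  have hqp : q ≠ p := by
    intro h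
    exact hIℓp (h ▸ hq1)
  -- q.2 ∉ Jl
  have hq2Jl : q.2 ∉ Jl := by
    intro hq2Jl
    have hpmem : p ∈ Ihat ×ˢ Jl := ⟨hpIhat, hJJl hpR.2⟩
    have hqmem : q ∈ Ihat ×ˢ Jl := ⟨hIℓIhat hq1, hq2Jl⟩
    have hdy2 : IsDyadicRect (Ihat ×ˢ Jl) := ⟨Ihat, Jl, hIhatDy, hJl, rfl⟩
    have hle := hP2 p hpP q hqP hqp.symm (Ihat ×ˢ Jl) hdy2 hpmem hqmem
    have hv2 : volume (Ihat ×ˢ Jl) = (2 : ℝ≥0∞) ^ (-(2 * (m : ℤ)) - 1) := by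
      rw [hprod, hIhatvol, hIℓvol, hJlvol]
      calc 2 * ((2:ℝ≥0∞) ^ (-(ℓ:ℤ)) * volume I) * ((2:ℝ≥0∞) ^ ((ℓ:ℤ)) * volume J)
          = (2 * ((2:ℝ≥0∞) ^ (-(ℓ:ℤ)) * (2:ℝ≥0∞) ^ ((ℓ:ℤ)))) * (volume I * volume J) := by
            ring
        _ = (2:ℝ≥0∞) ^ ((1:ℤ)) * (2:ℝ≥0∞) ^ (-(2 * (m : ℤ)) - 2) := by
            rw [← ENNReal.zpow_add h2 h2', hab]
            norm_num
        _ = (2:ℝ≥0∞) ^ (-(2 * (m : ℤ)) - 1) := by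
            rw [← ENNReal.zpow_add h2 h2']; ring_nf
    rw [hv2] at hle
    have hlt : (2 : ℝ≥0∞) ^ (-(2 * (m : ℤ)) - 1) < (2 : ℝ≥0∞) ^ (-(2 * (m : ℤ))) := by
      have h1 : (2 : ℝ≥0∞) ^ (-(2 * (m : ℤ)) - 1)
          = (2 : ℝ≥0∞) ^ (-(2 * (m : ℤ))) / 2 := by
        rw [ENNReal.zpow_sub h2 h2', zpow_one, div_eq_mul_inv]
      rw [h1]
      exact ENNReal.half_lt_self (ENNReal.zpow_pos h2 h2' _).ne'
        (ENNReal.zpow_lt_top h2 h2' _).ne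
    exact absurd hle (not_le.mpr hlt)
  refine ⟨q, ⟨hqP, hqp, ⟨hq1, hq2, hq2Jl⟩⟩, ?_⟩
  intro q' hq'P _ hq'R
  exact hquniq q' ⟨hq'P, hq'R⟩
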